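/- Consider the Ising model, i.e. I_x = I for all x ∈ ℤ with a fixed real I, and let β > 0. Then Z_n^± > 0 for every n ∈ ℕ and the ratio Z_n^+ / Z_n^± converges to 1 as n → ∞; that is, the partition functions with plus boundary conditions and with mixed boundary conditions are asymptotically equal. -/

import Mathlib

open Finset

/-- Spin configurations on the box `[-n, n] ⊆ ℤ`, encoded as boolean functions
(`true` ↔ spin `+1`, `false` ↔ spin `-1`). -/
abbrev Config (n : ℕ) := {x // x ∈ Finset.Icc (-(n : ℤ)) (n : ℤ)} → Bool

/-- The spin value `±1` of the configuration `σ` at the site `x` (value `1` off the box). -/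
noncomputable def spin {n : ℕ} (σ : Config n) (x : ℤ) : ℝ :=
  if h : x ∈ Finset.Icc (-(n : ℤ)) (n : ℤ) then (if σ ⟨x, h⟩ then 1 else -1) else 1

/-- The Hamiltonian `H_n^+` with plus boundary condition on both sides. -/
noncomputable def Hplus (I : ℤ → ℝ) (n : ℕ) (σ : Config n) : ℝ :=
  (∑ x ∈ Finset.Icc (-(n : ℤ) + 1) (n : ℤ),
      I x * (if spin σ (x - 1) ≠ spin σ x then 1 else 0))
    + I (-(n : ℤ)) * (if spin σ (-(n : ℤ)) ≠ 1 then 1 else 0)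
    + I ((n : ℤ) + 1) * (if spin σ (n : ℤ) ≠ 1 then 1 else 0)

/-- The Hamiltonian `H_n^±` (minus boundary on the left, plus on the right). -/
noncomputable def Hpm (I : ℤ → ℝ) (n : ℕ) (σ : Config n) : ℝ :=
  Hplus I n σ + I (-(n : ℤ)) * spin σ (-(n : ℤ))

/-- The partition function `Z_n^+`. -/
noncomputable def Zplus (β : ℝ) (I : ℤ → ℝ) (n : ℕ) : ℝ :=
  ∑ σ : Config n, Real.exp (-β * Hplus I n σ)

/-- The partition function `Z_n^±`. -/
noncomputable def Zpm (β : ℝ) (I : ℤ → ℝ) (n : ℕ) : ℝ :=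
  ∑ σ : Config n, Real.exp (-β * Hpm I n σ)

namespace IsingAux

noncomputable abbrev box (n : ℕ) : Finset ℤ := Finset.Icc (-(n : ℤ)) (n : ℤ)

abbrev Site (n : ℕ) := {x // x ∈ box n}

noncomputable def W (b : Bool) : ℝ := if b then -1 else 1

noncomputable def P (n : ℕ) (η : Config n) (x : ℤ) : ℝ :=
  ∏ y ∈ Finset.univ.filter (fun y : Site n => (y : ℤ) ≤ x), W (η y)

lemma P_pm (n : ℕ) (η : Config n) (x : ℤ) : P n η x = 1 ∨ P n η x = -1 := by
  unfold P
  refine Finset.prod_induction _ (fun z => z = 1 ∨ z = -1) ?_ (Or.inl rfl) ?_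
  · rintro a b (rfl | rfl) (rfl | rfl) <;> norm_num
  · intro y _
    unfold W
    by_cases h : η y <;> simp [h]

lemma P_ne_zero (n : ℕ) (η : Config n) (x : ℤ) : P n η x ≠ 0 := by
  rcases P_pm n η x with h | h <;> rw [h] <;> norm_num

noncomputable def Phi (n : ℕ) (η : Config n) : Config n :=
  fun x => decide (P n η x.val = 1)

lemma spin_Phi (n : ℕ) (η : Config n) (x : ℤ) (hx : x ∈ box n) :
    spin (Phi n η) x = P n η x := by
  unfold spin
  rw [dif_pos hx]
  rcases P_pm n η x with h | h <;> simp [Phi, h] <;> norm_num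

lemma memL (n : ℕ) : -(n : ℤ) ∈ box n := by
  simp [box]

lemma memR (n : ℕ) : (n : ℤ) ∈ box n := by
  simp [box]

lemma P_step (n : ℕ) (η : Config n) (x : ℤ) (hx : x ∈ box n) (hx' : -(n : ℤ) < x) :
    P n η x = P n η (x - 1) * W (η ⟨x, hx⟩) := by
  have hsplit : Finset.univ.filter (fun y : Site n => (y : ℤ) ≤ x)
      = insert ⟨x, hx⟩ (Finset.univ.filter (fun y : Site n => (y : ℤ) ≤ x - 1)) := by
    ext y
    simp only [Finset.mem_filter, Finset.mem_insert, Finset.mem_univ, true_and]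
    constructor
    · intro h
      rcases eq_or_lt_of_le h with h' | h'
      · left; exact Subtype.ext h'
      · right; omega
    · rintro (rfl | h)
      · simp
      · omega
  have hnot : (⟨x, hx⟩ : Site n) ∉ Finset.univ.filter (fun y : Site n => (y : ℤ) ≤ x - 1) := by
    simp
  unfold P
  rw [hsplit, Finset.prod_insert hnot, mul_comm]

lemma P_left (n : ℕ) (η : Config n) :
    P n η (-(n : ℤ)) = W (η ⟨-(n : ℤ), memL n⟩) := by
  have hsplit : Finset.univ.filter (fun y : Site n => (y : ℤ) ≤ -(n : ℤ))
      = {⟨-(n : ℤ), memL n⟩} := by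
    ext y
    simp only [Finset.mem_filter, Finset.mem_singleton, Finset.mem_univ, true_and]
    constructor
    · intro h
      have hy := y.prop
      simp only [box, Finset.mem_Icc] at hy
      exact Subtype.ext (le_antisymm h hy.1)
    · rintro rfl; simp
  unfold P
  rw [hsplit, Finset.prod_singleton]

lemma P_top (n : ℕ) (η : Config n) :
    P n η (n : ℤ) = ∏ y : Site n, W (η y) := by
  unfold P
  congr 1
  refine Finset.filter_true_of_mem fun y _ => ?_
  have hy := y.prop
  simp only [box, Finset.mem_Icc] at hy
  exact hy.2

lemma sgn_pm (n : ℕ) (η : Config n) :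
    (∏ y : Site n, W (η y)) = 1 ∨ (∏ y : Site n, W (η y)) = -1 := by
  rw [← P_top]; exact P_pm n η _

lemma Phi_bij (n : ℕ) : Function.Bijective (Phi n) := by
  rw [← Finite.injective_iff_bijective]
  intro η η' h
  have hP : ∀ x : ℤ, x ∈ box n → P n η x = P n η' x := by
    intro x hx
    have h1 : Phi n η ⟨x, hx⟩ = Phi n η' ⟨x, hx⟩ := congrFun h _
    simp only [Phi, decide_eq_decide] at h1
    rcases P_pm n η x with e1 | e1 <;> rcases P_pm n η' x with e2 | e2 <;>
      rw [e1, e2] <;> rw [e1, e2] at h1 <;> simp at h1 ⊢ <;> norm_num at h1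
  have hW : ∀ y : Site n, W (η y) = W (η' y) := by
    rintro ⟨x, hx⟩
    by_cases hxe : x = -(n : ℤ)
    · subst hxe
      rw [← P_left n η, ← P_left n η', hP _ (memL n)]
    · have hx' : -(n : ℤ) < x := by
        have := hx
        simp only [box, Finset.mem_Icc] at this
        omega
      have hx1 : x - 1 ∈ box n := by
        have := hx
        simp only [box, Finset.mem_Icc] at this ⊢
        omega
      have e1 := P_step n η x hx hx'
      have e2 := P_step n η' x hx hx'
      rw [hP x hx, hP (x-1) hx1] at e1
      rw [e1] at e2
      exact mul_left_cancel₀ (P_ne_zero n η' (x-1)) e2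
  funext y
  have := hW y
  unfold W at this
  cases hb : η y <;> cases hb' : η' y <;> rw [hb, hb'] at this <;> simp at this ⊢ <;> norm_num at this

lemma Hplus_Phi (I : ℝ) (n : ℕ) (η : Config n) :
    Hplus (fun _ => I) n (Phi n η)
      = I * ((∑ y : Site n, (if η y then (1:ℝ) else 0))
          + (if (∏ y : Site n, W (η y)) = -1 then (1:ℝ) else 0)) := by
  have hL : (if spin (Phi n η) (-(n:ℤ)) ≠ 1 then (1:ℝ) else 0)
      = (if η ⟨-(n:ℤ), memL n⟩ then 1 else 0) := by
    rw [spin_Phi n η _ (memL n), P_left]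
    cases hb : η ⟨-(n:ℤ), memL n⟩ <;> simp [W, hb] <;> norm_num
  have hR : (if spin (Phi n η) ((n:ℤ)) ≠ 1 then (1:ℝ) else 0)
      = (if (∏ y : Site n, W (η y)) = -1 then (1:ℝ) else 0) := by
    rw [spin_Phi n η _ (memR n), P_top]
    rcases sgn_pm n η with h | h <;> rw [h] <;> norm_num
  have hsum : ∀ x ∈ Finset.Icc (-(n:ℤ)+1) (n:ℤ),
      I * (if spin (Phi n η) (x-1) ≠ spin (Phi n η) x then (1:ℝ) else 0)
        = I * (if h : x ∈ box n then (if η ⟨x,h⟩ then (1:ℝ) else 0) else 0) := by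
    intro x hx
    rw [Finset.mem_Icc] at hx
    have hxb : x ∈ box n := by simp only [box, Finset.mem_Icc]; omega
    have hx1b : x - 1 ∈ box n := by simp only [box, Finset.mem_Icc]; omega
    rw [spin_Phi n η _ hxb, spin_Phi n η _ hx1b, dif_pos hxb,
        P_step n η x hxb (by omega)]
    rcases P_pm n η (x-1) with h | h <;> rw [h] <;>
      cases hb : η ⟨x, hxb⟩ <;> simp [W, hb] <;> norm_num
  have hbox : (∑ x ∈ Finset.Icc (-(n:ℤ)+1) (n:ℤ),
        (if h : x ∈ box n then (if η ⟨x,h⟩ then (1:ℝ) else 0) else 0))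
      + (if η ⟨-(n:ℤ), memL n⟩ then (1:ℝ) else 0)
      = ∑ y : Site n, (if η y then (1:ℝ) else 0) := by
    have hnm : -(n:ℤ) ∉ Finset.Icc (-(n:ℤ)+1) (n:ℤ) := by
      rw [Finset.mem_Icc]; omega
    have hins : insert (-(n:ℤ)) (Finset.Icc (-(n:ℤ)+1) (n:ℤ)) = box n := by
      ext z
      simp only [Finset.mem_insert, Finset.mem_Icc, box]
      omega
    calc (∑ x ∈ Finset.Icc (-(n:ℤ)+1) (n:ℤ),
        (if h : x ∈ box n then (if η ⟨x,h⟩ then (1:ℝ) else 0) else 0))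
      + (if η ⟨-(n:ℤ), memL n⟩ then (1:ℝ) else 0)
        = ∑ x ∈ insert (-(n:ℤ)) (Finset.Icc (-(n:ℤ)+1) (n:ℤ)),
            (if h : x ∈ box n then (if η ⟨x,h⟩ then (1:ℝ) else 0) else 0) := by
          rw [Finset.sum_insert hnm, dif_pos (memL n), add_comm]
      _ = ∑ x ∈ box n, (if h : x ∈ box n then (if η ⟨x,h⟩ then (1:ℝ) else 0) else 0) := by
          rw [hins]
      _ = ∑ y ∈ (box n).attach, (if h : (y:ℤ) ∈ box n then (if η ⟨y,h⟩ then (1:ℝ) else 0) else 0) :=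
          (Finset.sum_attach _ _).symm
      _ = ∑ y : Site n, (if η y then (1:ℝ) else 0) := by
          rw [Finset.univ_eq_attach]
          refine Finset.sum_congr rfl fun y _ => ?_
          rw [dif_pos y.prop]
  unfold Hplus
  rw [Finset.sum_congr rfl hsum, hL, hR, ← Finset.mul_sum, ← hbox]
  ring

end IsingAux

namespace IsingAux

noncomputable def wt (β I : ℝ) (b : Bool) : ℝ := if b then Real.exp (-(β*I)) else 1

lemma exp_Hplus (β I : ℝ) (n : ℕ) (η : Config n) :
    Real.exp (-β * Hplus (fun _ => I) n (Phi n η))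
      = ((1 + Real.exp (-(β*I)))/2
          + (1 - Real.exp (-(β*I)))/2 * ∏ y : Site n, W (η y))
        * ∏ y : Site n, wt β I (η y) := by
  rw [Hplus_Phi]
  have harg : -β * (I * ((∑ y : Site n, (if η y then (1:ℝ) else 0))
        + (if (∏ y : Site n, W (η y)) = -1 then (1:ℝ) else 0)))
      = (∑ y : Site n, (-(β*I)) * (if η y then (1:ℝ) else 0))
      + (-(β*I)) * (if (∏ y : Site n, W (η y)) = -1 then (1:ℝ) else 0) := by
    rw [← Finset.mul_sum]; ring
  rw [harg, Real.exp_add, Real.exp_sum]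
  have h1 : ∀ y : Site n, Real.exp ((-(β*I)) * (if η y then (1:ℝ) else 0)) = wt β I (η y) := by
    intro y
    cases hb : η y <;> simp [wt, hb]
  have h2 : Real.exp ((-(β*I)) * (if (∏ y : Site n, W (η y)) = -1 then (1:ℝ) else 0))
      = (1 + Real.exp (-(β*I)))/2 + (1 - Real.exp (-(β*I)))/2 * ∏ y : Site n, W (η y) := by
    rcases sgn_pm n η with h | h <;> rw [h]
    · rw [if_neg (by norm_num), mul_zero, Real.exp_zero]; ring
    · rw [if_pos rfl, mul_one]; ring
  rw [Finset.prod_congr rfl (fun y _ => h1 y), h2, mul_comm]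

lemma exp_Hpm (β I : ℝ) (n : ℕ) (η : Config n) :
    Real.exp (-β * Hpm (fun _ => I) n (Phi n η))
      = ((1 + Real.exp (-(β*I)))/2
          + (1 - Real.exp (-(β*I)))/2 * ∏ y : Site n, W (η y))
        * ((if η ⟨-(n:ℤ), memL n⟩ then Real.exp (β*I) else Real.exp (-(β*I)))
            * ∏ y : Site n, wt β I (η y)) := by
  have harg : -β * Hpm (fun _ => I) n (Phi n η)
      = -β * Hplus (fun _ => I) n (Phi n η) + (-(β*I)) * spin (Phi n η) (-(n:ℤ)) := by
    unfold Hpm; ring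
  rw [harg, Real.exp_add, exp_Hplus]
  have hspin : Real.exp ((-(β*I)) * spin (Phi n η) (-(n:ℤ)))
      = (if η ⟨-(n:ℤ), memL n⟩ then Real.exp (β*I) else Real.exp (-(β*I))) := by
    rw [spin_Phi n η _ (memL n), P_left]
    cases hb : η ⟨-(n:ℤ), memL n⟩ <;> simp [W, hb] <;> ring_nf
  rw [hspin]; ring

lemma sum_prod_bool {ι : Type*} [Fintype ι] [DecidableEq ι] (g : ι → Bool → ℝ) :
    ∑ η : ι → Bool, ∏ y, g y (η y) = ∏ y, (g y true + g y false) := by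
  have h := Finset.prod_univ_sum (fun _ : ι => (univ : Finset Bool)) g
  rw [Fintype.piFinset_univ] at h
  rw [← h]
  exact Finset.prod_congr rfl fun y _ => by rw [Fintype.sum_bool]

lemma card_site (n : ℕ) : Fintype.card (Site n) = 2*n + 1 := by
  rw [Fintype.card_coe, Int.card_Icc]
  omega

lemma Zplus_eq (β I : ℝ) (n : ℕ) :
    Zplus β (fun _ => I) n
      = ((1 + Real.exp (-(β*I)))^(2*n+2) + (1 - Real.exp (-(β*I)))^(2*n+2)) / 2 := by
  classical
  unfold Zplus
  rw [← Function.Bijective.sum_comp (Phi_bij n)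
    (fun σ => Real.exp (-β * Hplus (fun _ => I) n σ))]
  have step : ∀ η : Config n, Real.exp (-β * Hplus (fun _ => I) n (Phi n η))
      = (1 + Real.exp (-(β*I)))/2 * ∏ y : Site n, wt β I (η y)
        + (1 - Real.exp (-(β*I)))/2 * ∏ y : Site n, (W (η y) * wt β I (η y)) := by
    intro η
    rw [exp_Hplus, Finset.prod_mul_distrib]
    ring
  rw [Finset.sum_congr rfl fun η _ => step η, Finset.sum_add_distrib,
    ← Finset.mul_sum, ← Finset.mul_sum,
    sum_prod_bool (fun _ b => wt β I b),
    sum_prod_bool (fun _ b => W b * wt β I b)]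
  have s1 : wt β I true + wt β I false = 1 + Real.exp (-(β*I)) := by
    simp [wt]; ring
  have s2 : W true * wt β I true + W false * wt β I false = 1 - Real.exp (-(β*I)) := by
    simp [wt, W]; ring
  rw [Finset.prod_congr rfl fun (y : Site n) _ => s1,
    Finset.prod_congr rfl fun (y : Site n) _ => s2,
    Finset.prod_const, Finset.prod_const, Finset.card_univ, card_site]
  have hp : ∀ a : ℝ, a^(2*n+2) = a^(2*n+1) * a := fun a => by
    rw [← pow_succ]
  rw [hp, hp]
  ring

lemma Zpm_eq (β I : ℝ) (n : ℕ) :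
    Zpm β (fun _ => I) n
      = ((1 + Real.exp (-(β*I)))^(2*n+2) - (1 - Real.exp (-(β*I)))^(2*n+2)) / 2 := by
  classical
  set y0 : Site n := ⟨-(n:ℤ), memL n⟩ with hy0
  unfold Zpm
  rw [← Function.Bijective.sum_comp (Phi_bij n)
    (fun σ => Real.exp (-β * Hpm (fun _ => I) n σ))]
  have hexp1 : Real.exp (β*I) * Real.exp (-(β*I)) = 1 := by
    rw [← Real.exp_add]; norm_num
  have hmerge : ∀ η : Config n,
      (if η y0 then Real.exp (β*I) else Real.exp (-(β*I))) * ∏ y : Site n, wt β I (η y)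
        = ∏ y : Site n, (if y = y0 then (if η y then Real.exp (β*I) else Real.exp (-(β*I))) * wt β I (η y)
            else wt β I (η y)) := by
    intro η
    rw [← Finset.mul_prod_erase univ (fun y => wt β I (η y)) (Finset.mem_univ y0),
        ← Finset.mul_prod_erase univ _ (Finset.mem_univ y0), if_pos rfl,
        Finset.prod_congr rfl (fun y hy => if_neg (Finset.mem_erase.mp hy).1)]
    ring
  have step : ∀ η : Config n, Real.exp (-β * Hpm (fun _ => I) n (Phi n η))
      = (1 + Real.exp (-(β*I)))/2 * ∏ y : Site n, (if y = y0 then (if η y then Real.exp (β*I) else Real.exp (-(β*I))) * wt β I (η y)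
            else wt β I (η y))
        + (1 - Real.exp (-(β*I)))/2 * ∏ y : Site n, (W (η y) * (if y = y0 then (if η y then Real.exp (β*I) else Real.exp (-(β*I))) * wt β I (η y)
            else wt β I (η y))) := by
    intro η
    rw [exp_Hpm, hmerge, Finset.prod_mul_distrib]
    ring
  rw [Finset.sum_congr rfl fun η _ => step η, Finset.sum_add_distrib,
    ← Finset.mul_sum, ← Finset.mul_sum,
    sum_prod_bool (fun y b => (if y = y0 then (if b then Real.exp (β*I) else Real.exp (-(β*I))) * wt β I b
            else wt β I b)),
    sum_prod_bool (fun y b => W b * (if y = y0 then (if b then Real.exp (β*I) else Real.exp (-(β*I))) * wt β I b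
            else wt β I b))]
  have hprod1 : (∏ y : Site n, ((if y = y0 then (if true then Real.exp (β*I) else Real.exp (-(β*I))) * wt β I true
            else wt β I true) + (if y = y0 then (if false then Real.exp (β*I) else Real.exp (-(β*I))) * wt β I false
            else wt β I false))) = (1 + Real.exp (-(β*I)))^(2*n+1) := by
    have hpt : ∀ y : Site n, ((if y = y0 then (if true then Real.exp (β*I) else Real.exp (-(β*I))) * wt β I true
            else wt β I true) + (if y = y0 then (if false then Real.exp (β*I) else Real.exp (-(β*I))) * wt β I false
            else wt β I false)) = 1 + Real.exp (-(β*I)) := by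
      intro y
      by_cases hy : y = y0 <;> simp [hy, wt] <;> linarith [hexp1]
    rw [Finset.prod_congr rfl fun y _ => hpt y, Finset.prod_const, Finset.card_univ, card_site]
  have hprod2 : (∏ y : Site n, (W true * (if y = y0 then (if true then Real.exp (β*I) else Real.exp (-(β*I))) * wt β I true
            else wt β I true) + W false * (if y = y0 then (if false then Real.exp (β*I) else Real.exp (-(β*I))) * wt β I false
            else wt β I false))) = -(1 - Real.exp (-(β*I)))^(2*n+1) := by
    have hpt : ∀ y : Site n, (W true * (if y = y0 then (if true then Real.exp (β*I) else Real.exp (-(β*I))) * wt β I true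
            else wt β I true) + W false * (if y = y0 then (if false then Real.exp (β*I) else Real.exp (-(β*I))) * wt β I false
            else wt β I false)) = (1 - Real.exp (-(β*I))) * (if y = y0 then -1 else 1) := by
      intro y
      by_cases hy : y = y0 <;> simp [hy, wt, W] <;> linarith [hexp1]
    rw [Finset.prod_congr rfl fun y _ => hpt y, Finset.prod_mul_distrib,
      Finset.prod_const, Finset.card_univ, card_site,
      Finset.prod_ite_eq' univ y0 (fun _ => (-1 : ℝ)), if_pos (Finset.mem_univ y0)]
    ring
  rw [hprod1, hprod2]
  have hp : ∀ a : ℝ, a^(2*n+2) = a^(2*n+1) * a := fun a => by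
    rw [← pow_succ]
  rw [hp, hp]
  ring

end IsingAux

/-- For the Ising model (`I_x = I` for all `x`), the partition function `Z_n^±`
is positive and the ratio `Z_n^+/Z_n^±` tends to `1` as `n → ∞`: the two
partition functions are asymptotically equal. -/
theorem stmt_5 (β I : ℝ) (hβ : 0 < β) :
    (∀ n : ℕ, 0 < Zpm β (fun _ => I) n) ∧
    Filter.Tendsto (fun n : ℕ => Zplus β (fun _ => I) n / Zpm β (fun _ => I) n)
      Filter.atTop (nhds 1) := by
  open IsingAux in
  have hε : 0 < Real.exp (-(β*I)) := Real.exp_pos _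
  set ε := Real.exp (-(β*I)) with hεdef
  have ha : 0 < 1 + ε := by linarith
  have habs : |1 - ε| < 1 + ε := abs_lt.mpr ⟨by linarith, by linarith⟩
  have hlt : ∀ n : ℕ, |(1-ε)^(2*n+2)| < (1+ε)^(2*n+2) := by
    intro n
    rw [abs_pow]
    exact pow_lt_pow_left₀ habs (abs_nonneg _) (by omega)
  have hgap : ∀ n : ℕ, 0 < (1+ε)^(2*n+2) - (1-ε)^(2*n+2) := by
    intro n
    have h1 : (1-ε)^(2*n+2) ≤ |(1-ε)^(2*n+2)| := le_abs_self _
    linarith [hlt n]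
  have hpos : ∀ n : ℕ, 0 < Zpm β (fun _ => I) n := by
    intro n
    rw [IsingAux.Zpm_eq]
    have := hgap n
    linarith
  refine ⟨hpos, ?_⟩
  set r : ℝ := (1-ε)/(1+ε) with hrdef
  have hr : |r| < 1 := by
    rw [hrdef, abs_div, abs_of_pos ha]
    exact (div_lt_one ha).mpr habs
  have h0 : Filter.Tendsto (fun k : ℕ => r^k) Filter.atTop (nhds 0) :=
    tendsto_pow_atTop_nhds_zero_of_abs_lt_one hr
  have h1 : Filter.Tendsto (fun n : ℕ => 2*n+2) Filter.atTop Filter.atTop :=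
    Filter.tendsto_atTop_mono (fun n => by simp only [id_eq]; omega) Filter.tendsto_id
  have h2 : Filter.Tendsto (fun n : ℕ => r^(2*n+2)) Filter.atTop (nhds 0) := h0.comp h1
  have heq : ∀ n : ℕ, Zplus β (fun _ => I) n / Zpm β (fun _ => I) n
      = (1 + r^(2*n+2))/(1 - r^(2*n+2)) := by
    intro n
    rw [IsingAux.Zplus_eq, IsingAux.Zpm_eq, ← hεdef]
    have hane : (1+ε)^(2*n+2) ≠ 0 := ne_of_gt (pow_pos ha _)
    have hdne : (1+ε)^(2*n+2) - (1-ε)^(2*n+2) ≠ 0 := ne_of_gt (hgap n)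
    have hr2 : r^(2*n+2) = (1-ε)^(2*n+2)/(1+ε)^(2*n+2) := by
      rw [hrdef, div_pow]
    have e1 : 1 + (1-ε)^(2*n+2)/(1+ε)^(2*n+2)
        = ((1+ε)^(2*n+2) + (1-ε)^(2*n+2))/(1+ε)^(2*n+2) := by
      rw [add_div, div_self hane]
    have e2 : 1 - (1-ε)^(2*n+2)/(1+ε)^(2*n+2)
        = ((1+ε)^(2*n+2) - (1-ε)^(2*n+2))/(1+ε)^(2*n+2) := by
      rw [sub_div, div_self hane]
    have hc : ∀ (X Y c : ℝ), c ≠ 0 → (X/c)/(Y/c) = X/Y := by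
      intro X Y c hcne
      rw [div_div_div_comm, div_self hcne, div_one]
    rw [hr2, e1, e2, hc _ _ _ hane, hc _ _ _ (two_ne_zero)]
  have h3 : Filter.Tendsto (fun n : ℕ => (1 + r^(2*n+2))/(1 - r^(2*n+2)))
      Filter.atTop (nhds ((1+0)/(1-0))) :=
    Filter.Tendsto.div (Filter.Tendsto.add tendsto_const_nhds h2)
      (Filter.Tendsto.sub tendsto_const_nhds h2) (by norm_num)
  norm_num at h3
  exact Filter.Tendsto.congr (fun n => (heq n).symm) h3
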